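/- Let N ≥ 1 and u, v ∈ ℝ^N. Then the infimum over all N×N doubly stochastic matrices P of (1/N) Σ_{i,j} P_{ij} (u_i − v_j)² is attained, and it equals the minimum over all permutations π of {1,…,N} of (1/N) Σ_i (u_i − v_{π(i)})². -/
import Mathlib

open Finset

lemma sum_rotate {α β γ : Type*} [Fintype α] [Fintype β] [Fintype γ] (g : α → β → γ → ℝ) :
    ∑ a, ∑ b, ∑ c, g a b c = ∑ c, ∑ a, ∑ b, g a b c := by
  calc ∑ a, ∑ b, ∑ c, g a b c = ∑ a, ∑ c, ∑ b, g a b c :=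
        Finset.sum_congr rfl fun a _ => Finset.sum_comm
    _ = ∑ c, ∑ a, ∑ b, g a b c := Finset.sum_comm

lemma permMatrix_cost (N : ℕ) (u v : Fin N → ℝ) (σ : Equiv.Perm (Fin N)) :
    ∑ i, ∑ j, (σ.permMatrix ℝ) i j * (u i - v j) ^ 2 = ∑ i, (u i - v (σ i)) ^ 2 := by
  refine Finset.sum_congr rfl fun i _ => ?_
  rw [Finset.sum_eq_single (σ i)]
  · simp [Equiv.Perm.permMatrix, PEquiv.toMatrix, Equiv.toPEquiv]
  · intro j _ hj
    simp [Equiv.Perm.permMatrix, PEquiv.toMatrix, Equiv.toPEquiv, Ne.symm hj]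
  · simp

/-- **Birkhoff-type minimization.**
For `u, v ∈ ℝ^N`, the infimum over doubly stochastic matrices `P` of
`(1/N) Σ_{i,j} P_{ij} (u_i − v_j)²` is attained, and it equals the minimum over all
permutations `π` of `(1/N) Σ_i (u_i − v_{π(i)})²`. -/
theorem doublyStochastic_min_eq_perm_min (N : ℕ) (hN : 1 ≤ N) (u v : Fin N → ℝ) :
    ∃ m : ℝ,
      IsLeast {c : ℝ | ∃ P : Matrix (Fin N) (Fin N) ℝ,
          (∀ i j, 0 ≤ P i j) ∧ (∀ i, ∑ j, P i j = 1) ∧ (∀ j, ∑ i, P i j = 1) ∧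
          c = (1 / (N : ℝ)) * ∑ i, ∑ j, P i j * (u i - v j) ^ 2} m ∧
      IsLeast {c : ℝ | ∃ π : Equiv.Perm (Fin N),
          c = (1 / (N : ℝ)) * ∑ i, (u i - v (π i)) ^ 2} m := by
  set f : Equiv.Perm (Fin N) → ℝ :=
    fun π => (1 / (N : ℝ)) * ∑ i, (u i - v (π i)) ^ 2 with hf
  obtain ⟨π₀, -, hπ₀⟩ := Finset.exists_min_image Finset.univ f ⟨1, Finset.mem_univ 1⟩
  refine ⟨f π₀, ⟨?_, ?_⟩, ⟨π₀, rfl⟩, ?_⟩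
  · have hpm := permMatrix_mem_doublyStochastic (σ := π₀) (R := ℝ)
    exact ⟨π₀.permMatrix ℝ, fun i j => nonneg_of_mem_doublyStochastic hpm,
      sum_row_of_mem_doublyStochastic hpm, sum_col_of_mem_doublyStochastic hpm,
      by rw [permMatrix_cost]⟩
  · rintro c ⟨P, h1, h2, h3, rfl⟩
    have hP : P ∈ doublyStochastic ℝ (Fin N) :=
      mem_doublyStochastic_iff_sum.2 ⟨h1, h2, h3⟩
    obtain ⟨w, hw0, hw1, hwP⟩ := exists_eq_sum_perm_of_mem_doublyStochastic hP
    have key : ∑ i, ∑ j, P i j * (u i - v j) ^ 2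
        = ∑ σ : Equiv.Perm (Fin N), w σ * ∑ i, (u i - v (σ i)) ^ 2 := by
      subst hwP
      simp only [Matrix.sum_apply, Matrix.smul_apply, smul_eq_mul, Finset.sum_mul]
      rw [sum_rotate (fun i j σ => w σ * Equiv.Perm.permMatrix ℝ σ i j * (u i - v j) ^ 2)]
      refine Finset.sum_congr rfl fun σ _ => ?_
      rw [← permMatrix_cost N u v σ, Finset.mul_sum]
      refine Finset.sum_congr rfl fun i _ => ?_
      rw [Finset.mul_sum]
      refine Finset.sum_congr rfl fun j _ => ?_
      ring
    rw [key]
    calc f π₀ = ∑ σ : Equiv.Perm (Fin N), w σ * f π₀ := by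
          rw [← Finset.sum_mul, hw1, one_mul]
      _ ≤ ∑ σ : Equiv.Perm (Fin N), w σ * f σ :=
          Finset.sum_le_sum fun σ _ => mul_le_mul_of_nonneg_left (hπ₀ σ (mem_univ σ)) (hw0 σ)
      _ = 1 / (N : ℝ) * ∑ σ : Equiv.Perm (Fin N), w σ * ∑ i, (u i - v (σ i)) ^ 2 := by
          rw [Finset.mul_sum]
          exact Finset.sum_congr rfl fun σ _ => by rw [hf]; ring
  · rintro c ⟨π, rfl⟩
    exact hπ₀ π (mem_univ π)
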